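/- Let χ_0 ∈ ℂ with Im(χ_0) ≠ 0 and χ_0 ≠ 0, let b_k ∈ ℝ with χ_0 + b_k ≠ 0, and let s ∈ ℝ (playing the role of ‖a‖²₂). Define x̄(x,t) = x + (2 Re(χ_0) + s)·t + 1/(2 Im(χ_0)), and define L_0(x,t) = x̄² + 4 Im(χ_0)² t² + (i/conj(χ_0))·( x̄ + 2 i Im(χ_0) t ) + 1/(4 Im(χ_0)²) and L_k(x,t) = x̄² + 4 Im(χ_0)² t² + P_1 x̄ + P_2 t + P_3, where P_1 = i·( (2 conj(χ_0) + b_k)(2 Re(χ_0) + b_k) − conj(χ_0)² ) / ( conj(χ_0)·|χ_0 + b_k|² ), P_2 = −2 Im(χ_0)·( χ_0² + 4 Im(χ_0)² + b_k (2 Re(χ_0) + b_k) ) / ( conj(χ_0)·|χ_0 + b_k|² ), and P_3 = ( χ_0³ − 2( conj(χ_0)² + i χ_0 Im(χ_0) )( 2 i Im(χ_0) − b_k ) + conj(χ_0)·b_k² ) / ( 4 conj(χ_0)·Im(χ_0)²·|χ_0 + b_k|² ). Then |L_k(x,t)|² / |L_0(x,t)|² → 1 as x² + t² → ∞; consequently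 the first-order rogue wave intensity |q_k^{[1]}(x,t)|² = a_k²·|L_k(x,t)|²/|L_0(x,t)|² tends to the background value a_k² as x² + t² → ∞. -/

import Mathlib

noncomputable section

open Filter Complex

lemma shearTendsto (k m : ℝ) :
    Tendsto (fun p : ℝ × ℝ => (p.1 + k * p.2 + m, p.2)) (cocompact (ℝ × ℝ)) (cocompact (ℝ × ℝ)) :=
  (Homeomorph.mk
    ⟨fun p => (p.1 + k * p.2 + m, p.2), fun q => (q.1 - k * q.2 - m, q.2),
      fun p => by simp [Prod.ext_iff]; ring, fun q => by simp [Prod.ext_iff]; ring⟩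
    (by fun_prop) (by fun_prop)).isClosedEmbedding.tendsto_cocompact

lemma coreLim (c : ℝ) (hc : 0 < c) (α β γ : ℂ) :
    Tendsto (fun q : ℝ × ℝ =>
        (((q.1 : ℂ)) ^ 2 + (c : ℂ) * (q.2 : ℂ) ^ 2 + (α * q.1 + β * q.2 + γ)) /
          ((q.1 ^ 2 + c * q.2 ^ 2 : ℝ) : ℂ))
      (cocompact (ℝ × ℝ)) (nhds 1) := by
  set m : ℝ := min 1 c with hm
  have hm0 : 0 < m := lt_min one_pos hc
  have hnorm : Tendsto (fun q : ℝ × ℝ => ‖q‖) (cocompact (ℝ × ℝ)) atTop :=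
    tendsto_norm_cocompact_atTop
  have hev : ∀ᶠ q : ℝ × ℝ in cocompact (ℝ × ℝ), 1 ≤ ‖q‖ := hnorm.eventually_ge_atTop 1
  have hQ : ∀ q : ℝ × ℝ, m * ‖q‖ ^ 2 ≤ q.1 ^ 2 + c * q.2 ^ 2 := by
    intro q
    have h1 : ‖q‖ ^ 2 ≤ q.1 ^ 2 + q.2 ^ 2 := by
      rcases max_cases ‖q.1‖ ‖q.2‖ with ⟨h, _⟩ | ⟨h, _⟩ <;>
        · rw [Prod.norm_def, h]
          simp [Real.norm_eq_abs, sq_abs]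
          nlinarith [sq_nonneg q.1, sq_nonneg q.2]
    nlinarith [sq_nonneg q.1, sq_nonneg q.2, min_le_left (1:ℝ) c, min_le_right (1:ℝ) c,
      sq_nonneg ‖q‖]
  -- linear part over Q tends to 0
  have hlin : Tendsto (fun q : ℝ × ℝ =>
      (α * q.1 + β * q.2 + γ) / ((q.1 ^ 2 + c * q.2 ^ 2 : ℝ) : ℂ)) (cocompact (ℝ × ℝ))
      (nhds 0) := by
    apply squeeze_zero_norm' (a := fun q : ℝ × ℝ => (‖α‖ + ‖β‖ + ‖γ‖) / (m * ‖q‖))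
    · filter_upwards [hev] with q hq
      have hq0 : (0:ℝ) < ‖q‖ := by linarith
      have hsq : (1:ℝ) ≤ ‖q‖ ^ 2 := by nlinarith
      have hQq : m * ‖q‖ ^ 2 ≤ q.1 ^ 2 + c * q.2 ^ 2 := hQ q
      have hQpos : 0 < q.1 ^ 2 + c * q.2 ^ 2 := by nlinarith
      have h1 : ‖(q.1 : ℂ)‖ ≤ ‖q‖ := by
        rw [Complex.norm_real]; exact norm_fst_le q
      have h2 : ‖(q.2 : ℂ)‖ ≤ ‖q‖ := by
        rw [Complex.norm_real]; exact norm_snd_le q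
      have h3 : ‖γ‖ ≤ ‖γ‖ * ‖q‖ := le_mul_of_one_le_right (norm_nonneg γ) hq
      have hnum : ‖α * (q.1 : ℂ) + β * q.2 + γ‖ ≤ (‖α‖ + ‖β‖ + ‖γ‖) * ‖q‖ := by
        calc ‖α * (q.1 : ℂ) + β * q.2 + γ‖ ≤ ‖α * (q.1 : ℂ) + β * q.2‖ + ‖γ‖ := norm_add_le _ _
          _ ≤ (‖α * (q.1:ℂ)‖ + ‖β * (q.2:ℂ)‖) + ‖γ‖ := by gcongr; exact norm_add_le _ _
          _ = ‖α‖ * ‖(q.1:ℂ)‖ + ‖β‖ * ‖(q.2:ℂ)‖ + ‖γ‖ := by rw [norm_mul, norm_mul]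
          _ ≤ ‖α‖ * ‖q‖ + ‖β‖ * ‖q‖ + ‖γ‖ * ‖q‖ := by
              refine add_le_add (add_le_add ?_ ?_) h3
              · exact mul_le_mul_of_nonneg_left h1 (norm_nonneg α)
              · exact mul_le_mul_of_nonneg_left h2 (norm_nonneg β)
          _ = (‖α‖ + ‖β‖ + ‖γ‖) * ‖q‖ := by ring
      rw [norm_div]
      have hden : ‖((q.1 ^ 2 + c * q.2 ^ 2 : ℝ) : ℂ)‖ = q.1 ^ 2 + c * q.2 ^ 2 := by
        rw [Complex.norm_real, Real.norm_eq_abs, abs_of_pos hQpos]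
      rw [hden]
      calc ‖α * (q.1:ℂ) + β * q.2 + γ‖ / (q.1 ^ 2 + c * q.2 ^ 2)
          ≤ ((‖α‖ + ‖β‖ + ‖γ‖) * ‖q‖) / (m * ‖q‖ ^ 2) :=
            div_le_div₀ (by positivity) hnum (by positivity) hQq
        _ = (‖α‖ + ‖β‖ + ‖γ‖) / (m * ‖q‖) := by
            field_simp
    · exact tendsto_const_nhds.div_atTop (hnorm.const_mul_atTop hm0)
  -- main part
  have heq : ∀ᶠ q : ℝ × ℝ in cocompact (ℝ × ℝ),
      (1 : ℂ) + (α * q.1 + β * q.2 + γ) / ((q.1 ^ 2 + c * q.2 ^ 2 : ℝ) : ℂ) =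
      (((q.1 : ℂ)) ^ 2 + (c : ℂ) * (q.2 : ℂ) ^ 2 + (α * q.1 + β * q.2 + γ)) /
        ((q.1 ^ 2 + c * q.2 ^ 2 : ℝ) : ℂ) := by
    filter_upwards [hev] with q hq
    have hsq : (1:ℝ) ≤ ‖q‖ ^ 2 := by nlinarith
    have hQq : m * ‖q‖ ^ 2 ≤ q.1 ^ 2 + c * q.2 ^ 2 := hQ q
    have hQpos : 0 < q.1 ^ 2 + c * q.2 ^ 2 := by nlinarith
    have hne : ((q.1 ^ 2 + c * q.2 ^ 2 : ℝ) : ℂ) ≠ 0 :=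
      Complex.ofReal_ne_zero.mpr hQpos.ne'
    have hQc : (((q.1:ℝ):ℂ))^2 + (c:ℂ)*((q.2:ℝ):ℂ)^2 = ((q.1^2+c*q.2^2:ℝ):ℂ) := by
      push_cast; ring
    rw [hQc, eq_div_iff hne, add_mul, div_mul_cancel₀ _ hne, one_mul]
  have := (tendsto_const_nhds.add hlin).congr' heq
  simpa using this

lemma QposRW (c : ℝ) (hc : 0 < c) (q : ℝ × ℝ) (hq : 1 ≤ ‖q‖) :
    0 < q.1 ^ 2 + c * q.2 ^ 2 := by
  rcases le_or_gt 1 |q.1| with h | h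
  · nlinarith [sq_nonneg q.2, _root_.sq_abs q.1]
  · have : 1 ≤ |q.2| := by
      have := hq
      rw [Prod.norm_def] at this
      simp only [Real.norm_eq_abs] at this
      rcases max_cases |q.1| |q.2| with ⟨he, _⟩ | ⟨he, _⟩ <;> rw [he] at this <;> linarith
    have h2 : 1 ≤ q.2 ^ 2 := by nlinarith [_root_.sq_abs q.2, sq_nonneg (|q.2| - 1)]
    nlinarith [sq_nonneg q.1, mul_le_mul_of_nonneg_left h2 hc.le]

/-- `x̄(x,t) = x + (2 Re(χ₀) + s)·t + 1/(2 Im(χ₀))`. -/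
def xbarRW (χ₀ : ℂ) (s x t : ℝ) : ℝ :=
  x + (2 * χ₀.re + s) * t + 1 / (2 * χ₀.im)

/-- `L₀(x,t) = x̄² + 4 Im(χ₀)² t² + (i/conj χ₀)(x̄ + 2i Im(χ₀) t) + 1/(4 Im(χ₀)²)`. -/
def L0RW (χ₀ : ℂ) (s x t : ℝ) : ℂ :=
  (xbarRW χ₀ s x t : ℂ) ^ 2 + 4 * (χ₀.im : ℂ) ^ 2 * (t : ℂ) ^ 2 +
    (Complex.I / (starRingEnd ℂ χ₀)) * ((xbarRW χ₀ s x t : ℂ) + 2 * Complex.I * (χ₀.im : ℂ) * (t : ℂ)) +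
    1 / (4 * (χ₀.im : ℂ) ^ 2)

/-- `P₁ = i((2 conj χ₀ + b)(2 Re χ₀ + b) - conj(χ₀)²)/(conj χ₀ · |χ₀+b|²)`. -/
def P1RW (χ₀ : ℂ) (b : ℝ) : ℂ :=
  Complex.I * ((2 * (starRingEnd ℂ χ₀) + (b : ℂ)) * ((2 * χ₀.re + b : ℝ) : ℂ) -
      (starRingEnd ℂ χ₀) ^ 2) /
    ((starRingEnd ℂ χ₀) * (Complex.normSq (χ₀ + (b : ℂ)) : ℂ))

/-- `P₂ = -2 Im(χ₀)(χ₀² + 4 Im(χ₀)² + b(2 Re χ₀ + b))/(conj χ₀ · |χ₀+b|²)`. -/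
def P2RW (χ₀ : ℂ) (b : ℝ) : ℂ :=
  -2 * (χ₀.im : ℂ) * (χ₀ ^ 2 + 4 * (χ₀.im : ℂ) ^ 2 + (b : ℂ) * ((2 * χ₀.re + b : ℝ) : ℂ)) /
    ((starRingEnd ℂ χ₀) * (Complex.normSq (χ₀ + (b : ℂ)) : ℂ))

/-- `P₃ = (χ₀³ - 2(conj(χ₀)² + i χ₀ Im χ₀)(2i Im χ₀ - b) + conj(χ₀) b²)
      / (4 conj(χ₀) Im(χ₀)² |χ₀+b|²)`. -/
def P3RW (χ₀ : ℂ) (b : ℝ) : ℂ :=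
  (χ₀ ^ 3 - 2 * ((starRingEnd ℂ χ₀) ^ 2 + Complex.I * χ₀ * (χ₀.im : ℂ)) *
      (2 * Complex.I * (χ₀.im : ℂ) - (b : ℂ)) + (starRingEnd ℂ χ₀) * (b : ℂ) ^ 2) /
    (4 * (starRingEnd ℂ χ₀) * (χ₀.im : ℂ) ^ 2 * (Complex.normSq (χ₀ + (b : ℂ)) : ℂ))

/-- `L_k(x,t) = x̄² + 4 Im(χ₀)² t² + P₁ x̄ + P₂ t + P₃`. -/
def LkRW (χ₀ : ℂ) (b s x t : ℝ) : ℂ :=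
  (xbarRW χ₀ s x t : ℂ) ^ 2 + 4 * (χ₀.im : ℂ) ^ 2 * (t : ℂ) ^ 2 +
    P1RW χ₀ b * (xbarRW χ₀ s x t : ℂ) + P2RW χ₀ b * (t : ℂ) + P3RW χ₀ b

/-- As `x² + t² → ∞`, `|L_k|²/|L₀|² → 1`; consequently the first-order rogue wave intensity
`|q_k^{[1]}|² = a_k² |L_k|²/|L₀|²` tends to the background value `a_k²`. -/
theorem rogue_wave_background_limit (χ₀ : ℂ) (him : χ₀.im ≠ 0) (hχ₀ : χ₀ ≠ 0)
    (b : ℝ) (hb : χ₀ + (b : ℂ) ≠ 0) (s : ℝ) :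
    Filter.Tendsto
        (fun p : ℝ × ℝ =>
          ‖LkRW χ₀ b s p.1 p.2‖ ^ 2 / ‖L0RW χ₀ s p.1 p.2‖ ^ 2)
        (Filter.cocompact (ℝ × ℝ)) (nhds 1) ∧
      ∀ a : ℝ,
        Filter.Tendsto
          (fun p : ℝ × ℝ =>
            a ^ 2 * (‖LkRW χ₀ b s p.1 p.2‖ ^ 2 /
              ‖L0RW χ₀ s p.1 p.2‖ ^ 2))
          (Filter.cocompact (ℝ × ℝ)) (nhds (a ^ 2)) := by
  have hc : (0:ℝ) < 4 * χ₀.im ^ 2 := by positivity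
  set c : ℝ := 4 * χ₀.im ^ 2 with hcdef
  have h1 := coreLim c hc (P1RW χ₀ b) (P2RW χ₀ b) (P3RW χ₀ b)
  have h0 := coreLim c hc (Complex.I / (starRingEnd ℂ χ₀))
    ((Complex.I / (starRingEnd ℂ χ₀)) * (2 * Complex.I * (χ₀.im : ℂ))) (1 / (4 * (χ₀.im : ℂ) ^ 2))
  have hdiv := h1.div h0 one_ne_zero
  have hshear := shearTendsto (2 * χ₀.re + s) (1 / (2 * χ₀.im))
  have hevq : ∀ᶠ q : ℝ × ℝ in cocompact (ℝ × ℝ), ((q.1 ^ 2 + c * q.2 ^ 2 : ℝ) : ℂ) ≠ 0 := by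
    filter_upwards [tendsto_norm_cocompact_atTop.eventually_ge_atTop 1] with q hq
    exact Complex.ofReal_ne_zero.mpr (QposRW c hc q hq).ne'
  have hcomp := hdiv.comp hshear
  have hratio : Tendsto (fun p : ℝ × ℝ => LkRW χ₀ b s p.1 p.2 / L0RW χ₀ s p.1 p.2)
      (cocompact (ℝ × ℝ)) (nhds 1) := by
    rw [show (1:ℂ) = 1/1 by norm_num]
    refine hcomp.congr' ?_
    filter_upwards [hshear.eventually hevq] with p hp
    set u : ℝ := p.1 + (2 * χ₀.re + s) * p.2 + 1 / (2 * χ₀.im) with hu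
    have hxu : xbarRW χ₀ s p.1 p.2 = u := rfl
    simp only [Function.comp_apply, Pi.div_apply]
    have e1 : ((u : ℂ)) ^ 2 + (c : ℂ) * (p.2 : ℂ) ^ 2 +
        (P1RW χ₀ b * u + P2RW χ₀ b * p.2 + P3RW χ₀ b) = LkRW χ₀ b s p.1 p.2 := by
      simp only [LkRW, hxu, hcdef]
      push_cast
      ring
    have e0 : ((u : ℂ)) ^ 2 + (c : ℂ) * (p.2 : ℂ) ^ 2 +
        ((Complex.I / (starRingEnd ℂ χ₀)) * u +
          (Complex.I / (starRingEnd ℂ χ₀)) * (2 * Complex.I * (χ₀.im : ℂ)) * p.2 +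
          1 / (4 * (χ₀.im : ℂ) ^ 2)) = L0RW χ₀ s p.1 p.2 := by
      simp only [L0RW, hxu, hcdef]
      push_cast
      ring
    rw [div_div_div_comm, div_self hp, div_one, e1, e0]
  have habs : Tendsto
      (fun p : ℝ × ℝ => ‖LkRW χ₀ b s p.1 p.2 / L0RW χ₀ s p.1 p.2‖ ^ 2)
      (cocompact (ℝ × ℝ)) (nhds 1) := by
    have h := ((continuous_norm.tendsto 1).comp hratio).pow 2
    simpa using h
  have key : Tendsto
      (fun p : ℝ × ℝ =>
        ‖LkRW χ₀ b s p.1 p.2‖ ^ 2 / ‖L0RW χ₀ s p.1 p.2‖ ^ 2)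
      (cocompact (ℝ × ℝ)) (nhds 1) := by
    refine habs.congr fun p => ?_
    rw [norm_div, div_pow]
  refine ⟨key, fun a => ?_⟩
  simpa using key.const_mul (a ^ 2)


end
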